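/- With symmetric cross-diffusion d_{ij} = d_{ji}, powers β_{ij} = 2, and potentials μ_i(φ) = (d_i + d_{ii} φ_i^{α_i} + Σ_{j≠i} d_{ij} φ_j^2) φ_i, the function F(φ) = Σ_i (d_{ii} φ_i^{α_i+2}/(α_i+2) + d_i φ_i^2/2) + Σ_{i<j} d_{ij} φ_i^2 φ_j^2 / 2 satisfies ∂F/∂φ_i = μ_i for every i on (0,∞)^M. -/

import Mathlib

open Finset

/-- In the symmetric case, the free energy
F(φ) = Σ_i (d_{ii} φ_i^{α_i+2}/(α_i+2) + d_i φ_i²/2) + Σ_{i<j} d_{ij} φ_i² φ_j²/2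
satisfies ∂F/∂φ_i = μ_i on (0,∞)^M. -/
theorem stmt1 (M : ℕ) (hM : 1 ≤ M)
    (d dd α : Fin M → ℝ) (c : Fin M → Fin M → ℝ)
    (hd : ∀ i, 0 ≤ d i) (hdd : ∀ i, 0 ≤ dd i) (hα : ∀ i, 0 ≤ α i)
    (hc : ∀ i j, 0 ≤ c i j) (hsym : ∀ i j, c i j = c j i)
    (μ : Fin M → (Fin M → ℝ) → ℝ)
    (hμ : ∀ i φ, μ i φ =
      (d i + dd i * φ i ^ α i + ∑ j ∈ univ.erase i, c i j * φ j ^ 2) * φ i)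
    (F : (Fin M → ℝ) → ℝ)
    (hF : ∀ φ, F φ =
      (∑ i, (dd i * φ i ^ (α i + 2) / (α i + 2) + d i * φ i ^ 2 / 2))
      + ∑ i, ∑ j ∈ univ.filter (fun j => i < j), c i j * (φ i ^ 2 * φ j ^ 2) / 2) :
    ∀ φ : Fin M → ℝ, (∀ k, 0 < φ k) → ∀ i,
      fderiv ℝ F φ (Pi.single i 1) = μ i φ := by
  intro φ hφ i
  have hFeq : F = fun ψ : Fin M → ℝ =>
      (∑ i, (dd i * ψ i ^ (α i + 2) / (α i + 2) + d i * ψ i ^ 2 / 2))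
      + ∑ i, ∑ j ∈ univ.filter (fun j => i < j), c i j * (ψ i ^ 2 * ψ j ^ 2) / 2 :=
    funext hF
  -- projection derivatives
  have hproj : ∀ k, HasFDerivAt (fun ψ : Fin M → ℝ => ψ k)
      (ContinuousLinearMap.proj k : (Fin M → ℝ) →L[ℝ] ℝ) φ :=
    fun k => hasFDerivAt_apply k φ
  have hsq : ∀ k, HasFDerivAt (fun ψ : Fin M → ℝ => ψ k ^ 2)
      ((2 * φ k) • (ContinuousLinearMap.proj k : (Fin M → ℝ) →L[ℝ] ℝ)) φ := by
    intro k
    have h := (hasDerivAt_pow 2 (φ k)).comp_hasFDerivAt φ (hproj k)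
    simpa [Function.comp_def] using h
  -- single-variable terms
  have h1 : ∀ k, HasFDerivAt
      (fun ψ : Fin M → ℝ => dd k * ψ k ^ (α k + 2) / (α k + 2) + d k * ψ k ^ 2 / 2)
      ((dd k * φ k ^ (α k + 1) + d k * φ k) •
        (ContinuousLinearMap.proj k : (Fin M → ℝ) →L[ℝ] ℝ)) φ := by
    intro k
    have hne : φ k ≠ 0 := ne_of_gt (hφ k)
    have hr : HasDerivAt (fun x : ℝ => dd k * x ^ (α k + 2) / (α k + 2) + d k * x ^ 2 / 2)
        (dd k * φ k ^ (α k + 1) + d k * φ k) (φ k) := by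
      have hrp : HasDerivAt (fun x : ℝ => x ^ (α k + 2))
          ((α k + 2) * φ k ^ (α k + 2 - 1)) (φ k) :=
        Real.hasDerivAt_rpow_const (Or.inl hne)
      have hp2 : HasDerivAt (fun x : ℝ => x ^ 2) (2 * φ k ^ 1) (φ k) := hasDerivAt_pow 2 (φ k)
      have := ((hrp.const_mul (dd k)).div_const (α k + 2)).add
        ((hp2.const_mul (d k)).div_const 2)
      refine this.congr_deriv ?_
      have hαne : α k + 2 ≠ 0 := by have := hα k; intro h; linarith
      have hexp : α k + 2 - 1 = α k + 1 := by ring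
      rw [hexp]
      field_simp
    exact hr.comp_hasFDerivAt φ (hproj k)
  -- cross terms
  have h2 : ∀ k l, HasFDerivAt
      (fun ψ : Fin M → ℝ => c k l * (ψ k ^ 2 * ψ l ^ 2) / 2)
      ((c k l * (φ k * φ l ^ 2)) • (ContinuousLinearMap.proj k : (Fin M → ℝ) →L[ℝ] ℝ)
        + (c k l * (φ k ^ 2 * φ l)) • (ContinuousLinearMap.proj l : (Fin M → ℝ) →L[ℝ] ℝ)) φ := by
    intro k l
    have heq : (fun ψ : Fin M → ℝ => c k l * (ψ k ^ 2 * ψ l ^ 2) / 2)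
        = (fun ψ : Fin M → ℝ => c k l / 2 * (ψ k ^ 2 * ψ l ^ 2)) := by
      funext ψ; ring
    rw [heq]
    have h := ((hsq k).mul (hsq l)).const_mul (c k l / 2)
    refine h.congr_fderiv ?_
    ext v
    simp [ContinuousLinearMap.smul_apply, ContinuousLinearMap.add_apply, smul_smul]
    ring
  -- total derivative
  have hD : HasFDerivAt F
      ((∑ k, (dd k * φ k ^ (α k + 1) + d k * φ k) •
          (ContinuousLinearMap.proj k : (Fin M → ℝ) →L[ℝ] ℝ))
        + ∑ k, ∑ l ∈ univ.filter (fun l => k < l),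
            ((c k l * (φ k * φ l ^ 2)) • (ContinuousLinearMap.proj k : (Fin M → ℝ) →L[ℝ] ℝ)
              + (c k l * (φ k ^ 2 * φ l)) •
                (ContinuousLinearMap.proj l : (Fin M → ℝ) →L[ℝ] ℝ))) φ := by
    rw [hFeq]
    exact (HasFDerivAt.fun_sum (fun k _ => h1 k)).add
      (HasFDerivAt.fun_sum (fun k _ => HasFDerivAt.fun_sum (fun l _ => h2 k l)))
  rw [hD.fderiv, hμ]
  -- evaluate at Pi.single i 1
  simp only [ContinuousLinearMap.add_apply, ContinuousLinearMap.coe_sum', Finset.sum_apply,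
    ContinuousLinearMap.smul_apply, ContinuousLinearMap.proj_apply, smul_eq_mul,
    Pi.single_apply]
  have eA : (∑ x : Fin M, (dd x * φ x ^ (α x + 1) + d x * φ x) * if x = i then (1:ℝ) else 0)
      = dd i * φ i ^ (α i + 1) + d i * φ i := by
    rw [Finset.sum_congr rfl (fun x _ => by rw [mul_ite, mul_one, mul_zero])]
    simp
  have eB : (∑ x : Fin M, ∑ l ∈ Finset.filter (fun l => x < l) Finset.univ,
        ((c x l * (φ x * φ l ^ 2) * if x = i then (1:ℝ) else 0) +
          c x l * (φ x ^ 2 * φ l) * if l = i then (1:ℝ) else 0))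
      = (∑ l ∈ Finset.filter (fun l => i < l) Finset.univ, c i l * (φ i * φ l ^ 2))
        + ∑ k ∈ Finset.filter (fun k => k < i) Finset.univ, c k i * (φ k ^ 2 * φ i) := by
    simp only [Finset.sum_add_distrib]
    congr 1
    · have hx : ∀ x : Fin M, (∑ l ∈ Finset.filter (fun l => x < l) Finset.univ,
          (c x l * (φ x * φ l ^ 2) * if x = i then (1:ℝ) else 0))
          = if x = i then (∑ l ∈ Finset.filter (fun l => i < l) Finset.univ,
              c i l * (φ i * φ l ^ 2)) else 0 := by
        intro x
        by_cases h : x = i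
        · subst h; simp
        · simp [h]
      rw [Finset.sum_congr rfl (fun x _ => hx x)]
      simp
    · have hx : ∀ x : Fin M, (∑ l ∈ Finset.filter (fun l => x < l) Finset.univ,
          (c x l * (φ x ^ 2 * φ l) * if l = i then (1:ℝ) else 0))
          = if x < i then c x i * (φ x ^ 2 * φ i) else 0 := by
        intro x
        rw [Finset.sum_congr rfl (fun l _ => by rw [mul_ite, mul_one, mul_zero])]
        simp [Finset.sum_ite_eq']
      rw [Finset.sum_congr rfl (fun x _ => hx x), Finset.sum_ite, Finset.sum_const_zero,
        add_zero]
  rw [eA, eB]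
  have hsplit : ∑ j ∈ Finset.univ.erase i, c i j * φ j ^ 2
      = (∑ j ∈ Finset.filter (fun j => j < i) Finset.univ, c i j * φ j ^ 2)
        + ∑ j ∈ Finset.filter (fun j => i < j) Finset.univ, c i j * φ j ^ 2 := by
    rw [← Finset.sum_union (by
      rw [Finset.disjoint_left]
      intro a ha hb
      simp only [Finset.mem_filter, Finset.mem_univ, true_and] at ha hb
      exact absurd hb (not_lt_of_gt ha))]
    apply Finset.sum_congr _ (fun _ _ => rfl)
    ext j
    simp only [Finset.mem_erase, Finset.mem_union, Finset.mem_filter, Finset.mem_univ,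
      true_and, and_true]
    exact (lt_or_lt_iff_ne).symm
  rw [hsplit, Real.rpow_add_one (ne_of_gt (hφ i)) (α i)]
  have b1 : ∑ l ∈ Finset.filter (fun l => i < l) Finset.univ, c i l * (φ i * φ l ^ 2)
      = (∑ l ∈ Finset.filter (fun l => i < l) Finset.univ, c i l * φ l ^ 2) * φ i := by
    rw [Finset.sum_mul]; exact Finset.sum_congr rfl (fun l _ => by ring)
  have b2 : ∑ k ∈ Finset.filter (fun k => k < i) Finset.univ, c k i * (φ k ^ 2 * φ i)
      = (∑ k ∈ Finset.filter (fun k => k < i) Finset.univ, c i k * φ k ^ 2) * φ i := by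
    rw [Finset.sum_mul]; exact Finset.sum_congr rfl (fun k _ => by rw [hsym k i]; ring)
  rw [b1, b2]
  ring
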